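/- Omnidirectional transmission: if pⱼ* lies in the global transmission polygon 𝒞 = ⋂ᵢ {x ∈ ℝ² : ⟨pᵢ* − p_cm, x − p_cm⟩ > −J_p/n}, then for every actuator index i the DC gain matrix [P₀]ⱼᵢ = (1/n)I₂ + [v_r]ⱼ[v_r]ᵢᵀ is invertible. -/

import Mathlib

open Matrix Finset

noncomputable def Omega : Matrix (Fin 2) (Fin 2) ℝ := !![0, -1; 1, 0]

theorem omnidirectional_transmission (n : ℕ) (hn : 1 ≤ n)
    (p : Fin n → Fin 2 → ℝ)
    (pcm : Fin 2 → ℝ) (hpcm : pcm = ((n : ℝ))⁻¹ • ∑ k, p k)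
    (Jp : ℝ) (hJp : Jp = ∑ k, (p k - pcm) ⬝ᵥ (p k - pcm)) (hJpos : 0 < Jp)
    (vr : Fin n → Fin 2 → ℝ)
    (hvr : ∀ k, vr k = (Real.sqrt Jp)⁻¹ • Omega.mulVec (p k - pcm))
    (j : Fin n)
    (hj : p j ∈ ⋂ i : Fin n, {x : Fin 2 → ℝ | (p i - pcm) ⬝ᵥ (x - pcm) > -(Jp / n)}) :
    ∀ i : Fin n,
      IsUnit (((n : ℝ))⁻¹ • (1 : Matrix (Fin 2) (Fin 2) ℝ) + vecMulVec (vr j) (vr i)).det := by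
  intro i
  have hn0 : (0:ℝ) < (n:ℝ) := by exact_mod_cast Nat.lt_of_lt_of_le Nat.zero_lt_one hn
  have hsq : Real.sqrt Jp * Real.sqrt Jp = Jp := Real.mul_self_sqrt hJpos.le
  have hs0 : Real.sqrt Jp ≠ 0 := by positivity
  -- the inner product of vr j and vr i
  have hdot : vr j ⬝ᵥ vr i = Jp⁻¹ * ((p i - pcm) ⬝ᵥ (p j - pcm)) := by
    rw [hvr, hvr]
    simp only [dotProduct, Omega, mulVec, Fin.sum_univ_two, Pi.smul_apply, smul_eq_mul,
      Pi.sub_apply, Matrix.cons_val', Matrix.cons_val_zero, Matrix.cons_val_one,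
      Matrix.head_cons, Matrix.head_fin_const, Matrix.cons_dotProduct, Matrix.empty_val',
      Matrix.cons_val_fin_one, Matrix.of_apply]
    field_simp
    rw [Real.sq_sqrt hJpos.le]
    ring
  -- determinant formula
  have hdet : (((n : ℝ))⁻¹ • (1 : Matrix (Fin 2) (Fin 2) ℝ) + vecMulVec (vr j) (vr i)).det
      = ((n:ℝ))⁻¹ * ((n:ℝ))⁻¹ + ((n:ℝ))⁻¹ * (vr j ⬝ᵥ vr i) := by
    simp [Matrix.det_fin_two, vecMulVec_apply, Matrix.one_apply, dotProduct,
      Fin.sum_univ_two]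
    ring
  have hjmem : (p i - pcm) ⬝ᵥ (p j - pcm) > -(Jp / n) := by
    have := Set.mem_iInter.mp hj i
    exact this
  have hpos : 0 < (((n : ℝ))⁻¹ • (1 : Matrix (Fin 2) (Fin 2) ℝ) + vecMulVec (vr j) (vr i)).det := by
    rw [hdet, hdot]
    have h1 : Jp⁻¹ * ((p i - pcm) ⬝ᵥ (p j - pcm)) > Jp⁻¹ * (-(Jp / n)) :=
      mul_lt_mul_of_pos_left hjmem (by positivity)
    have h2 : Jp⁻¹ * (-(Jp / n)) = -((n:ℝ))⁻¹ := by field_simp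
    rw [h2] at h1
    have h3 := mul_lt_mul_of_pos_left h1 (inv_pos.mpr hn0)
    nlinarith [h3]
  exact (hpos.ne').isUnit
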